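/- Let m be a positive integer, let c be a real number with 1 ≤ c < 3/2, and let F ⊆ ℝ^{2m} be the set of tuples (y_1,…,y_m, z_1,…,z_m) with 1 ≤ y_i ≤ c and 1 ≤ z_i ≤ c for every i and Σ_{i=1}^m z_i² = Σ_{i=1}^m y_i·z_i. Suppose (y_1,…,y_m, z_1,…,z_m) ∈ F attains the maximum of Σ_{i=1}^m z_i²·y_i·e^{−z_i−y_i} over F. Then for every 1 ≤ i ≤ m, y_i = c or z_i = c. -/

import Mathlib

lemma deriv_pos_exists (G : ℝ → ℝ) (D : ℝ) (hG : HasDerivAt G D 0) (hD : 0 < D)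
    (ε : ℝ) (hε : 0 < ε) : ∃ t : ℝ, 0 < t ∧ t < ε ∧ G 0 < G t := by
  have hs := hasDerivAt_iff_tendsto_slope.mp hG
  have h1 : ∀ᶠ t in nhdsWithin (0:ℝ) {(0:ℝ)}ᶜ, 0 < slope G 0 t :=
    hs.eventually (eventually_gt_nhds hD)
  have h2 : ∀ᶠ t in nhdsWithin (0:ℝ) (Set.Ioi 0), 0 < slope G 0 t :=
    h1.filter_mono (nhdsWithin_mono 0 (fun x hx => ne_of_gt hx))
  have h3 : ∀ᶠ t in nhdsWithin (0:ℝ) (Set.Ioi 0), t ∈ Set.Ioo (0:ℝ) ε :=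
    Filter.eventually_of_mem (Ioo_mem_nhdsGT hε) (fun x hx => hx)
  obtain ⟨t, hslope, ht0, htε⟩ := (h2.and h3).exists
  refine ⟨t, ht0, htε, ?_⟩
  rw [slope_def_field, div_pos_iff] at hslope
  rcases hslope with ⟨h, _⟩ | ⟨_, h⟩ <;> linarith

lemma aux_deriv (a b : ℝ) :
    HasDerivAt (fun t : ℝ => (b * (1 + t)) ^ 2 * (b * (1 + t) - (b - a) / (1 + t)) *
      Real.exp (-(b * (1 + t)) - (b * (1 + t) - (b - a) / (1 + t))))
      (Real.exp (-b - a) * (b ^ 2 * (a + a ^ 2 + 2 * b - 3 * a * b))) 0 := by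
  have h1 : HasDerivAt (fun t : ℝ => 1 + t) 1 0 := (hasDerivAt_id 0).const_add 1
  have hZ : HasDerivAt (fun t : ℝ => b * (1 + t)) b 0 := by
    simpa using h1.const_mul b
  have hq : HasDerivAt (fun t : ℝ => (b - a) / (1 + t)) (-(b - a)) 0 := by
    have := (hasDerivAt_const (0:ℝ) (b - a)).div h1 (by norm_num)
    exact this.congr_deriv (by norm_num)
  have hY : HasDerivAt (fun t : ℝ => b * (1 + t) - (b - a) / (1 + t)) (2 * b - a) 0 := by
    have := hZ.sub hq
    exact this.congr_deriv (by ring)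
  have hE : HasDerivAt (fun t : ℝ => Real.exp (-(b * (1 + t)) - (b * (1 + t) - (b - a) / (1 + t))))
      (Real.exp (-(b * (1 + 0)) - (b * (1 + 0) - (b - a) / (1 + 0))) * (-b - (2 * b - a))) 0 :=
    (hZ.neg.sub hY).exp
  have hG := ((hZ.pow 2).mul hY).mul hE
  refine hG.congr_deriv ?_
  norm_num
  ring

set_option maxHeartbeats 1000000 in
lemma aux_main (a b c : ℝ) (ha1 : 1 ≤ a) (ha2 : a < c) (hb1 : 1 ≤ b) (hb2 : b < c)
    (hc2 : c < 3 / 2) :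
    ∃ t : ℝ, 0 < t ∧
      1 ≤ b * (1 + t) - (b - a) / (1 + t) ∧ b * (1 + t) - (b - a) / (1 + t) ≤ c ∧
      1 ≤ b * (1 + t) ∧ b * (1 + t) ≤ c ∧
      (b * (1 + t)) ^ 2 = (b * (1 + t) - (b - a) / (1 + t)) * (b * (1 + t)) + (b ^ 2 - a * b) ∧
      b ^ 2 * a * Real.exp (-b - a) <
        (b * (1 + t)) ^ 2 * (b * (1 + t) - (b - a) / (1 + t)) *
          Real.exp (-(b * (1 + t)) - (b * (1 + t) - (b - a) / (1 + t))) := by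
  have hc1 : (1:ℝ) ≤ c := le_trans ha1 ha2.le
  have hcpos : (0:ℝ) < c := by linarith
  have hpoly : 0 < a + a ^ 2 + 2 * b - 3 * a * b := by
    nlinarith [mul_nonneg (sub_nonneg.2 hb2.le) (by linarith : (0:ℝ) ≤ 3 * a - 2),
      mul_nonneg (sub_nonneg.2 ha2.le) (sub_nonneg.2 ha1),
      mul_pos (by linarith : (0:ℝ) < c) (by linarith : (0:ℝ) < 3 - 2 * c)]
  have hD : 0 < Real.exp (-b - a) * (b ^ 2 * (a + a ^ 2 + 2 * b - 3 * a * b)) := by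
    have := Real.exp_pos (-b - a)
    positivity
  have hε : 0 < min ((c - b) / c) ((c - a) / 4) := by
    apply lt_min <;> [exact div_pos (by linarith) hcpos; linarith]
  obtain ⟨t, ht0, htε, hGlt⟩ := deriv_pos_exists _ _ (aux_deriv a b) hD _ hε
  have ht1 : t < (c - b) / c := lt_of_lt_of_le htε (min_le_left _ _)
  have ht2 : t < (c - a) / 4 := lt_of_lt_of_le htε (min_le_right _ _)
  have htc : c * t < c - b := (lt_div_iff₀' hcpos).mp ht1
  have hthalf : t < 1 / 2 := by nlinarith
  have h1t : (0:ℝ) < 1 + t := by linarith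
  have h1tne : (1:ℝ) + t ≠ 0 := ne_of_gt h1t
  have hbt0 : 0 ≤ b * t := mul_nonneg (by linarith) ht0.le
  have hbtct : b * t ≤ c * t := mul_le_mul_of_nonneg_right hb2.le ht0.le
  have hnum0 : 0 ≤ t * (2 * b + b * t - a) :=
    mul_nonneg ht0.le (by nlinarith)
  have key : b * (1 + t) - (b - a) / (1 + t) = a + t * (2 * b + b * t - a) / (1 + t) := by
    field_simp; ring
  refine ⟨t, ht0, ?_, ?_, ?_, ?_, ?_, ?_⟩
  · -- 1 ≤ Y
    rw [key]
    have : 0 ≤ t * (2 * b + b * t - a) / (1 + t) := div_nonneg hnum0 h1t.le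
    linarith
  · -- Y ≤ c
    rw [key]
    have hdle : t * (2 * b + b * t - a) / (1 + t) ≤ t * (2 * b + b * t - a) :=
      div_le_self hnum0 (by linarith)
    nlinarith [mul_lt_mul_of_pos_left (show 2 * b + b * t - a < 4 by nlinarith) ht0]
  · have : b * (1 + t) = b + b * t := by ring
    linarith
  · have : b * (1 + t) = b + b * t := by ring
    linarith
  · field_simp; ring
  · have hG0 : (b * (1 + 0)) ^ 2 * (b * (1 + 0) - (b - a) / (1 + 0)) *
        Real.exp (-(b * (1 + 0)) - (b * (1 + 0) - (b - a) / (1 + 0))) =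
        b ^ 2 * a * Real.exp (-b - a) := by norm_num
    rw [← hG0]
    exact hGlt

/-- Claim (case 2 of Claim A). Let `1 ≤ c < 3/2`. If `(y, z)` maximises
`Σ z_i²·y_i·e^{−z_i−y_i}` over all tuples with `1 ≤ y_i, z_i ≤ c` and
`Σ z_i² = Σ y_i·z_i`, then for every `i`, `y_i = c` or `z_i = c`. -/
theorem programA_case2 (m : ℕ) (hm : 0 < m) (c : ℝ) (hc1 : 1 ≤ c) (hc2 : c < 3 / 2)
    (y z : Fin m → ℝ)
    (hy : ∀ i, 1 ≤ y i ∧ y i ≤ c) (hz : ∀ i, 1 ≤ z i ∧ z i ≤ c)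
    (hsum : ∑ i, (z i) ^ 2 = ∑ i, y i * z i)
    (hmax : ∀ y' z' : Fin m → ℝ, (∀ i, 1 ≤ y' i ∧ y' i ≤ c) → (∀ i, 1 ≤ z' i ∧ z' i ≤ c) →
      (∑ i, (z' i) ^ 2 = ∑ i, y' i * z' i) →
      ∑ i, (z' i) ^ 2 * y' i * Real.exp (-(z' i) - y' i) ≤
        ∑ i, (z i) ^ 2 * y i * Real.exp (-(z i) - y i)) :
    ∀ i, y i = c ∨ z i = c := by
  by_contra hcon
  push_neg at hcon
  obtain ⟨i₀, hyne, hzne⟩ := hcon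
  have ha2 : y i₀ < c := lt_of_le_of_ne (hy i₀).2 hyne
  have hb2 : z i₀ < c := lt_of_le_of_ne (hz i₀).2 hzne
  obtain ⟨t, ht0, hY1, hYc, hZ1, hZc, hctr, hlt⟩ :=
    aux_main (y i₀) (z i₀) c (hy i₀).1 ha2 (hz i₀).1 hb2 hc2
  set Yt := z i₀ * (1 + t) - (z i₀ - y i₀) / (1 + t) with hYt
  set Zt := z i₀ * (1 + t) with hZt
  set y' := Function.update y i₀ Yt with hy'
  set z' := Function.update z i₀ Zt with hz'
  have hy'i : ∀ i, 1 ≤ y' i ∧ y' i ≤ c := by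
    intro i
    rcases eq_or_ne i i₀ with h | h
    · subst h; simp [hy', Function.update_self]; exact ⟨hY1, hYc⟩
    · simp [hy', Function.update_of_ne h]; exact hy i
  have hz'i : ∀ i, 1 ≤ z' i ∧ z' i ≤ c := by
    intro i
    rcases eq_or_ne i i₀ with h | h
    · subst h; simp [hz', Function.update_self]; exact ⟨hZ1, hZc⟩
    · simp [hz', Function.update_of_ne h]; exact hz i
  have split : ∀ F : Fin m → ℝ, ∑ i, F i = F i₀ + ∑ i ∈ Finset.univ.erase i₀, F i :=
    fun F => (Finset.add_sum_erase _ F (Finset.mem_univ i₀)).symm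
  have erase_eq : ∀ (F : ℝ → ℝ → ℝ),
      ∑ i ∈ Finset.univ.erase i₀, F (y' i) (z' i) = ∑ i ∈ Finset.univ.erase i₀, F (y i) (z i) := by
    intro F
    apply Finset.sum_congr rfl
    intro i hi
    have h := Finset.ne_of_mem_erase hi
    simp [hy', hz', Function.update_of_ne h]
  have hsum' : ∑ i, (z' i) ^ 2 = ∑ i, y' i * z' i := by
    rw [split (fun i => (z' i) ^ 2), split (fun i => y' i * z' i)]
    rw [split (fun i => (z i) ^ 2), split (fun i => y i * z i)] at hsum
    have e1 := erase_eq (fun a b => b ^ 2)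
    have e2 := erase_eq (fun a b => a * b)
    have hzi0 : z' i₀ = Zt := Function.update_self _ _ _
    have hyi0 : y' i₀ = Yt := Function.update_self _ _ _
    rw [hzi0, hyi0, e1, e2]
    have : Zt ^ 2 = Yt * Zt + ((z i₀) ^ 2 - y i₀ * z i₀) := hctr
    linarith [hsum]
  have hle := hmax y' z' hy'i hz'i hsum'
  rw [split (fun i => (z' i) ^ 2 * y' i * Real.exp (-(z' i) - y' i)),
      split (fun i => (z i) ^ 2 * y i * Real.exp (-(z i) - y i))] at hle
  have e3 := erase_eq (fun a b => b ^ 2 * a * Real.exp (-b - a))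
  have hzi0 : z' i₀ = Zt := Function.update_self _ _ _
  have hyi0 : y' i₀ = Yt := Function.update_self _ _ _
  rw [hzi0, hyi0, e3] at hle
  have hlt' : (z i₀) ^ 2 * y i₀ * Real.exp (-(z i₀) - y i₀) <
      Zt ^ 2 * Yt * Real.exp (-Zt - Yt) := by
    have : (z i₀) ^ 2 * y i₀ = y i₀ * (z i₀) ^ 2 := by ring
    calc (z i₀) ^ 2 * y i₀ * Real.exp (-(z i₀) - y i₀)
        = (z i₀) ^ 2 * y i₀ * Real.exp (-z i₀ - y i₀) := by ring_nf
      _ < Zt ^ 2 * Yt * Real.exp (-Zt - Yt) := hlt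
  linarith [hle, hlt']
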